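/- Let d ≥ 3 and n ≥ 1 be integers. If n is even, then χ(d; n) > 0. If n is odd and (n, d) ≠ (1, 3), then χ(d; n) < 0. -/
import Mathlib


/-- `hcomplete k d` is the complete homogeneous symmetric polynomial
`h_k(d₁,…,d_r) = ∑_{i₁+⋯+i_r=k} d₁^{i₁}⋯d_r^{i_r}` evaluated at the tuple `d`. -/
def hcomplete {r : ℕ} (k : ℕ) (d : Fin r → ℤ) : ℤ :=
  ∑ f ∈ Finset.Nat.antidiagonalTuple r k, ∏ j, d j ^ f j

/-- `chi d n = d₁⋯d_r · ∑_{i=0}^{n} (−1)^{n−i} · binom(n+r+1, i) · h_{n−i}(d₁,…,d_r)`,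
which by a theorem of Azuma is the degree of the top Chern class of an `n`-dimensional
smooth complete intersection of hypersurfaces of degrees `d₁,…,d_r` in `ℙ^{n+r}`. -/
def chi {r : ℕ} (d : Fin r → ℤ) (n : ℕ) : ℤ :=
  (∏ j, d j) * ∑ i ∈ Finset.range (n + 1),
    (-1) ^ (n - i) * ((n + r + 1).choose i : ℤ) * hcomplete (n - i) d

lemma key (d : ℤ) (n : ℕ) :
    d * chi ![d] n = (-1) ^ n * (d - 1) ^ (n + 2) + ((n : ℤ) + 2) * d - 1 := by
  have hh : ∀ k, hcomplete k ![d] = d ^ k := by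
    intro k
    simp [hcomplete, Finset.Nat.antidiagonalTuple_one]
  have h1 : (d - 1) ^ (n + 2)
      = ∑ i ∈ Finset.range (n + 3), (-1) ^ i * d ^ (n + 2 - i) * ((n + 2).choose i : ℤ) := by
    have := add_pow (-1 : ℤ) d (n + 2)
    rw [neg_add_eq_sub] at this
    exact this
  rw [Finset.sum_range_succ, Finset.sum_range_succ] at h1
  have h2 : d * chi ![d] n
      = ∑ i ∈ Finset.range (n + 1), (-1) ^ n * ((-1) ^ i * d ^ (n + 2 - i) * ((n + 2).choose i : ℤ)) := by
    rw [chi, Finset.mul_sum, Finset.mul_sum]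
    refine Finset.sum_congr rfl fun i hi => ?_
    have hi' : i ≤ n := Nat.lt_succ_iff.mp (Finset.mem_range.mp hi)
    rw [hh]
    have hpow : d * (Finset.univ.prod ![d] * ((-1) ^ (n - i) * ((n + 1 + 1).choose i : ℤ) * d ^ (n - i)))
        = (-1) ^ (n - i) * ((n + 2).choose i : ℤ) * d ^ (n - i + 2) := by
      simp [Matrix.cons_val_fin_one]
      ring
    rw [hpow]
    have h3 : n - i + 2 = n + 2 - i := by omega
    have h4 : (-1 : ℤ) ^ (n - i) = (-1) ^ n * (-1) ^ i := by
      have : (-1 : ℤ) ^ (n - i) * (-1) ^ i = (-1) ^ n := by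
        rw [← pow_add]; congr 1; omega
      have h5 : ((-1 : ℤ) ^ i) * ((-1) ^ i) = 1 := by
        rw [← pow_add, Even.neg_one_pow ⟨i, rfl⟩]
      calc (-1 : ℤ) ^ (n - i) = (-1) ^ (n - i) * (((-1) ^ i) * ((-1) ^ i)) := by rw [h5, mul_one]
        _ = (-1) ^ n * (-1) ^ i := by rw [← mul_assoc, this]
    rw [h3, h4]; ring
  rw [h2, ← Finset.mul_sum]
  have hc1 : ((n + 2).choose (n + 1) : ℤ) = (n : ℤ) + 2 := by
    rw [Nat.choose_succ_self_right]; push_cast; ring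
  have hc2 : ((n + 2).choose (n + 2) : ℤ) = 1 := by simp
  have hs : ∑ i ∈ Finset.range (n + 1), (-1) ^ i * d ^ (n + 2 - i) * ((n + 2).choose i : ℤ)
      = (d - 1) ^ (n + 2) - (-1) ^ (n + 1) * d ^ 1 * ((n : ℤ) + 2) - (-1) ^ (n + 2) * d ^ 0 * 1 := by
    rw [h1, hc1, hc2]
    have e1 : n + 2 - (n + 1) = 1 := by omega
    have e2 : n + 2 - (n + 2) = 0 := by omega
    rw [e1, e2]; ring
  rw [hs]
  have hsq : (-1 : ℤ) ^ n * (-1) ^ n = 1 := by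
    rw [← pow_add, Even.neg_one_pow ⟨n, rfl⟩]
  linear_combination (d * ((n : ℤ) + 2) - 1) * hsq

lemma two_pow_lb (k : ℕ) (hk : 3 ≤ k) : 2 * k + 1 ≤ 2 ^ k := by
  induction k with
  | zero => omega
  | succ m ih =>
    rcases Nat.lt_or_ge m 3 with h | h
    · interval_cases m <;> simp_all
    · have := ih h
      have h2 : 2 ^ m ≥ 8 := by
        calc (8:ℕ) = 2 ^ 3 := rfl
        _ ≤ 2 ^ m := Nat.pow_le_pow_right (by norm_num) h
      rw [pow_succ]; omega


/-- For `d ≥ 3` and `n ≥ 1`: if `n` is even then `χ(d; n) > 0`; if `n` is odd and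
`(n, d) ≠ (1, 3)` then `χ(d; n) < 0`. -/
theorem chi_hypersurface_sign (n : ℕ) (d : ℤ) (hn : 1 ≤ n) (hd : 3 ≤ d) :
    (Even n → 0 < chi ![d] n) ∧
    (Odd n → ((n : ℕ), d) ≠ (1, 3) → chi ![d] n < 0) := by
  have hkey := key d n
  have hdpos : (0 : ℤ) < d := by linarith
  constructor
  · intro he
    rw [Even.neg_one_pow he, one_mul] at hkey
    have hp : (0 : ℤ) < (d - 1) ^ (n + 2) := pow_pos (by linarith) _
    have hn' : (1 : ℤ) ≤ (n : ℤ) := by exact_mod_cast hn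
    nlinarith
  · intro ho hne
    rw [Odd.neg_one_pow ho, neg_one_mul] at hkey
    -- need (d-1)^(n+2) > (n+2)*d - 1
    have hgt : ((n : ℤ) + 2) * d - 1 < (d - 1) ^ (n + 2) := by
      rcases eq_or_lt_of_le hn with h1 | h2
    -- n = 1
      · have hn1 : n = 1 := h1.symm
        subst hn1
        have hd4 : 4 ≤ d := by
          rcases eq_or_lt_of_le hd with h | h
          · exact absurd (by rw [← h]) hne
          · omega
        push_cast
        nlinarith [sq_nonneg (d - 1)]
      · -- n ≥ 2
        have hk : 3 ≤ n + 1 := by omega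
        have h2p := two_pow_lb (n + 1) hk
        have h2p' : (2 * (n : ℤ) + 3 : ℤ) ≤ (2 : ℤ) ^ (n + 1) := by
          push_cast
          exact_mod_cast h2p
        have hle : (2 : ℤ) ^ (n + 1) ≤ (d - 1) ^ (n + 1) :=
          pow_le_pow_left₀ (by norm_num) (by linarith) _
        have hfac : (d - 1) ^ (n + 2) = (d - 1) * (d - 1) ^ (n + 1) := by
          rw [← pow_succ']
        have hpos : (0 : ℤ) < (d - 1) ^ (n + 1) := pow_pos (by linarith) _
        nlinarith
    have hneg : d * chi ![d] n < 0 := by linarith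
    nlinarith [hneg]
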